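/- Let q ≥ 2 be an integer and let j = ω(q^3 − 1). For i ≥ 1 let t_i denote the i-th smallest prime not congruent to 1 modulo 3 (that is, congruent to 0 or 2 modulo 3), and let u_i denote the i-th smallest prime congruent to 1 modulo 3. Then q ≥ min over 0 ≤ m ≤ j of max{ t_1⋯t_m + 1 , (t_1⋯t_m · u_1⋯u_{j−m} + 1)^{1/3} }, where empty products equal 1 and the 1/3-rd power is a real power. -/
import Mathlib

open Finset

lemma prod_nth_le_aux {P : ℕ → Prop} [DecidablePred P] :
    ∀ A : Finset ℕ, (∀ a ∈ A, P a) →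
      ∏ i ∈ Finset.range A.card, Nat.nth P i ≤ ∏ a ∈ A, a := by
  intro A
  induction A using Finset.strongInduction with
  | _ A ih =>
    intro hA
    rcases A.eq_empty_or_nonempty with rfl | hne
    · simp
    · obtain ⟨a, ha, hamax⟩ := A.exists_max_image id hne
      have hcard : A.card = (A.erase a).card + 1 := by
        rw [Finset.card_erase_of_mem ha]
        have := Finset.card_pos.mpr hne
        omega
      have hnth : Nat.nth P (A.erase a).card ≤ a := by
        by_contra h
        push_neg at h
        have hc : Nat.count P (a + 1) ≤ (A.erase a).card :=
          Nat.le_nth_of_count_le h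
        have hsub : A ⊆ (Finset.range (a + 1)).filter P := by
          intro b hb
          simp only [Finset.mem_filter, Finset.mem_range]
          exact ⟨Nat.lt_succ_of_le (hamax b hb), hA b hb⟩
        have := Finset.card_le_card hsub
        rw [← Nat.count_eq_card_filter_range] at this
        omega
      calc ∏ i ∈ Finset.range A.card, Nat.nth P i
          = (∏ i ∈ Finset.range (A.erase a).card, Nat.nth P i) *
              Nat.nth P (A.erase a).card := by
            rw [hcard, Finset.prod_range_succ]
        _ ≤ (∏ b ∈ A.erase a, b) * a := by
            exact Nat.mul_le_mul
              (ih _ (Finset.erase_ssubset ha) (fun b hb => hA b (Finset.mem_of_mem_erase hb)))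
              hnth
        _ = ∏ b ∈ A, b := Finset.prod_erase_mul A _ ha

lemma dvd_q_sub_one {q p : ℕ} (hq : 2 ≤ q) (hp : p.Prime) (hdvd : p ∣ q ^ 3 - 1)
    (h3 : p % 3 ≠ 1) : p ∣ q - 1 := by
  haveI : Fact p.Prime := ⟨hp⟩
  have hq3 : 1 ≤ q ^ 3 := Nat.one_le_pow _ _ (by omega)
  have h1 : ((q : ZMod p)) ^ 3 = 1 := by
    have : ((q ^ 3 - 1 : ℕ) : ZMod p) = 0 :=
      (ZMod.natCast_eq_zero_iff _ _).mpr hdvd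
    rw [Nat.cast_sub hq3] at this
    push_cast at this
    rwa [sub_eq_zero] at this
  have hq0 : (q : ZMod p) ≠ 0 := by
    intro h
    rw [h] at h1
    simp at h1
  have hord : orderOf (q : ZMod p) ∣ 3 := orderOf_dvd_of_pow_eq_one h1
  rcases (Nat.prime_three.eq_one_or_self_of_dvd _ hord) with h | h
  · have : (q : ZMod p) = 1 := orderOf_eq_one_iff.mp h
    have : ((q - 1 : ℕ) : ZMod p) = 0 := by
      rw [Nat.cast_sub (by omega)]
      push_cast
      rw [this, sub_self]
    exact (ZMod.natCast_eq_zero_iff _ _).mp this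
  · exfalso
    have hfer : (q : ZMod p) ^ (p - 1) = 1 := ZMod.pow_card_sub_one_eq_one hq0
    have h31 : 3 ∣ p - 1 := h ▸ orderOf_dvd_of_pow_eq_one hfer
    have := hp.two_le
    omega

/-- The hybrid lower bound for `q` in terms of `j = ω(q^3 - 1)`: with `t_i` the
`i`-th smallest prime not congruent to `1 (mod 3)` (i.e. `≡ 0` or `2 (mod 3)`)
and `u_i` the `i`-th smallest prime congruent to `1 (mod 3)`,
`q ≥ min_{0 ≤ m ≤ j} max{ t_1⋯t_m + 1, (t_1⋯t_m · u_1⋯u_{j-m} + 1)^(1/3) }`. -/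
theorem stmt15 (q : ℕ) (hq : 2 ≤ q) :
    (q : ℝ) ≥ (Finset.range ((q ^ 3 - 1).primeFactors.card + 1)).inf'
      (by simp)
      (fun m => max
        (((∏ i ∈ Finset.range m, Nat.nth (fun p => p.Prime ∧ p % 3 ≠ 1) i : ℕ) : ℝ) + 1)
        ((((∏ i ∈ Finset.range m, Nat.nth (fun p => p.Prime ∧ p % 3 ≠ 1) i) *
            (∏ i ∈ Finset.range ((q ^ 3 - 1).primeFactors.card - m),
              Nat.nth (fun p => p.Prime ∧ p % 3 = 1) i) : ℕ) + 1 : ℝ) ^ ((1 : ℝ) / 3))) := by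
  classical
  have hq3 : 2 ≤ q ^ 3 := le_trans hq (Nat.le_self_pow (by norm_num) q)
  set S := (q ^ 3 - 1).primeFactors with hS
  set A := S.filter (fun p => p % 3 ≠ 1) with hA
  set B := S.filter (fun p => p % 3 = 1) with hB
  have hAprime : ∀ p ∈ A, p.Prime := fun p hp =>
    Nat.prime_of_mem_primeFactors (Finset.mem_filter.mp hp).1
  have hBprime : ∀ p ∈ B, p.Prime := fun p hp =>
    Nat.prime_of_mem_primeFactors (Finset.mem_filter.mp hp).1
  have hcards : B.card + A.card = S.card := by
    rw [hA, hB]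
    exact Finset.card_filter_add_card_filter_not _
  have hmem : A.card ∈ Finset.range (S.card + 1) := by
    rw [Finset.mem_range]; omega
  refine le_trans (Finset.inf'_le _ hmem) ?_
  apply max_le
  · -- first bound
    have h1 : ∏ i ∈ Finset.range A.card, Nat.nth (fun p => p.Prime ∧ p % 3 ≠ 1) i ≤
        ∏ a ∈ A, a := by
      apply prod_nth_le_aux
      intro a hca
      exact ⟨hAprime a hca, (Finset.mem_filter.mp hca).2⟩
    have h2 : ∏ a ∈ A, a ∣ q - 1 := by
      apply Finset.prod_primes_dvd
      · intro p hp
        exact (hAprime p hp).prime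
      · intro p hp
        exact dvd_q_sub_one hq (hAprime p hp)
          (Nat.dvd_of_mem_primeFactors (Finset.mem_filter.mp hp).1)
          (Finset.mem_filter.mp hp).2
    have h3 : ∏ a ∈ A, a ≤ q - 1 := Nat.le_of_dvd (by omega) h2
    have h4 : (∏ i ∈ Finset.range A.card, Nat.nth (fun p => p.Prime ∧ p % 3 ≠ 1) i) + 1 ≤ q := by
      omega
    calc ((∏ i ∈ Finset.range A.card, Nat.nth (fun p => p.Prime ∧ p % 3 ≠ 1) i : ℕ) : ℝ) + 1
        = (((∏ i ∈ Finset.range A.card, Nat.nth (fun p => p.Prime ∧ p % 3 ≠ 1) i) + 1 : ℕ) : ℝ) := by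
          push_cast; ring
      _ ≤ (q : ℝ) := Nat.cast_le.mpr h4
  · -- second bound
    have h1 : ∏ i ∈ Finset.range A.card, Nat.nth (fun p => p.Prime ∧ p % 3 ≠ 1) i ≤
        ∏ a ∈ A, a := by
      apply prod_nth_le_aux
      intro a hca
      exact ⟨hAprime a hca, (Finset.mem_filter.mp hca).2⟩
    have hBcard : B.card = S.card - A.card := by omega
    have h1' : ∏ i ∈ Finset.range (S.card - A.card), Nat.nth (fun p => p.Prime ∧ p % 3 = 1) i ≤
        ∏ a ∈ B, a := by
      rw [← hBcard]
      apply prod_nth_le_aux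
      intro a hca
      exact ⟨hBprime a hca, (Finset.mem_filter.mp hca).2⟩
    have h2 : (∏ a ∈ B, a) * (∏ a ∈ A, a) = ∏ a ∈ S, a := by
      rw [hA, hB]
      exact Finset.prod_filter_mul_prod_filter_not _ _ _
    have h3 : ∏ a ∈ S, a ∣ q ^ 3 - 1 := Nat.prod_primeFactors_dvd _
    have h4 : ∏ a ∈ S, a ≤ q ^ 3 - 1 := Nat.le_of_dvd (by omega) h3
    set N := (∏ i ∈ Finset.range A.card, Nat.nth (fun p => p.Prime ∧ p % 3 ≠ 1) i) *
      (∏ i ∈ Finset.range (S.card - A.card), Nat.nth (fun p => p.Prime ∧ p % 3 = 1) i) with hN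
    have h5 : N ≤ q ^ 3 - 1 := by
      calc N ≤ (∏ a ∈ A, a) * (∏ a ∈ B, a) := Nat.mul_le_mul h1 h1'
        _ = ∏ a ∈ S, a := by rw [mul_comm]; exact h2
        _ ≤ q ^ 3 - 1 := h4
    have h6 : ((N : ℝ) + 1) ≤ (q : ℝ) ^ (3 : ℕ) := by
      have : N + 1 ≤ q ^ 3 := by omega
      calc ((N : ℝ) + 1) = ((N + 1 : ℕ) : ℝ) := by push_cast; ring
        _ ≤ ((q ^ 3 : ℕ) : ℝ) := Nat.cast_le.mpr this
        _ = (q : ℝ) ^ (3 : ℕ) := by push_cast; ring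
    calc ((N : ℝ) + 1) ^ ((1 : ℝ) / 3)
        ≤ ((q : ℝ) ^ (3 : ℕ)) ^ ((1 : ℝ) / 3) := by
          apply Real.rpow_le_rpow (by positivity) h6 (by norm_num)
      _ = (q : ℝ) := by
          rw [← Real.rpow_natCast (q : ℝ) 3, ← Real.rpow_mul (by positivity)]
          norm_num
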